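/- Fix γ ≥ 0, a finite set Y ⊂ ℝ^d, and f : Y → {-1,1}. Then deg_{(γ,W)}(f) ≥ t+1 if and only if there exists Ψ : Y → ℝ with Σ_{y∈Y} |Ψ(y)| = 1 and, for every S ⊆ [d] with |S| ≤ t, Σ_{y∈Y} Ψ(y) f(y) − W·|Σ_{y∈Y} Ψ(y) χ_S(y)| > γ, where χ_S(y) = ∏_{i∈S} y_i. -/

import Mathlib

open Classical in
/-- Degree of a multilinear polynomial given by its coefficient vector. -/
noncomputable def polyDegree {ι : Type*} [Fintype ι] (c : Finset ι → ℝ) : ℕ :=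
  Finset.sup (Finset.univ.filter fun S => c S ≠ 0) Finset.card

/-- Evaluation of a multilinear polynomial given by its coefficient vector. -/
noncomputable def evalPoly {ι : Type*} [Fintype ι] (c : Finset ι → ℝ) (x : ι → ℝ) : ℝ :=
  ∑ S : Finset ι, c S * ∏ i ∈ S, x i

/-- Weight (L1-norm of the coefficient vector) of a multilinear polynomial. -/
noncomputable def weight {ι : Type*} [Fintype ι] (c : Finset ι → ℝ) : ℝ :=
  ∑ S : Finset ι, |c S|

open Classical in
/-- The OR function on `{-1,1}^d`, with `-1` = TRUE. -/
noncomputable def ORd {d : ℕ} (x : Fin d → ℝ) : ℝ :=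
  if ∃ i, x i = -1 then -1 else 1

/-- The Boolean cube `{-1,1}^d` inside `ℝ^d`. -/
def cube (d : ℕ) : Set (Fin d → ℝ) := {x | ∀ i, x i = 1 ∨ x i = -1}

open Classical in
/-- Hamming weight: number of coordinates equal to `-1`. -/
noncomputable def hamming {d : ℕ} (x : Fin d → ℝ) : ℕ :=
  (Finset.univ.filter fun i => x i = -1).card

theorem stmt_8 (d t : ℕ) (γ : ℝ) (hγ : 0 ≤ γ) (W : ℝ) (hW : 0 < W)
    (Y : Finset (Fin d → ℝ)) (f : (Fin d → ℝ) → ℝ)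
    (hf : ∀ y ∈ Y, f y = 1 ∨ f y = -1) :
    (¬ ∃ c : Finset (Fin d) → ℝ, polyDegree c ≤ t ∧ weight c ≤ W ∧
        ∀ y ∈ Y, |evalPoly c y - f y| ≤ γ) ↔
    ∃ Ψ : (Fin d → ℝ) → ℝ,
      (∑ y ∈ Y, |Ψ y|) = 1 ∧
      ∀ S : Finset (Fin d), S.card ≤ t →
        γ < (∑ y ∈ Y, Ψ y * f y) - W * |∑ y ∈ Y, Ψ y * ∏ i ∈ S, y i| := by
  classical
  constructor
  · -- forward direction: via hyperplane separation
    intro h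
    let M : (Finset (Fin d) → ℝ) → ({x // x ∈ Y} → ℝ) := fun c y => evalPoly c ↑y
    let vtx : Finset (Fin d) → ℝ → (Finset (Fin d) → ℝ) :=
      fun S ε S' => if S' = S then ε * W else 0
    have evalvtx : ∀ (S : Finset (Fin d)) (ε : ℝ) (y : Fin d → ℝ),
        evalPoly (vtx S ε) y = ε * W * ∏ i ∈ S, y i := by
      intro S ε y
      unfold evalPoly
      rw [Finset.sum_eq_single S]
      · simp [vtx]
      · intro S' _ hne; simp [vtx, if_neg hne]
      · intro hS; exact absurd (Finset.mem_univ S) hS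
    set F : Set (Finset (Fin d) → ℝ) :=
      {c | ∃ S : Finset (Fin d), S.card ≤ t ∧ (c = vtx S 1 ∨ c = vtx S (-1))} with hF
    have hFfin : F.Finite := by
      apply Set.Finite.subset
        ((Set.finite_range (fun S => vtx S 1)).union (Set.finite_range fun S => vtx S (-1)))
      rintro c ⟨S, _, rfl | rfl⟩
      · exact Or.inl ⟨S, rfl⟩
      · exact Or.inr ⟨S, rfl⟩
    set K : Set ({x // x ∈ Y} → ℝ) := convexHull ℝ (M '' F) with hK
    have Kcompact : IsCompact K := (hFfin.image M).isCompact_convexHull (𝕜 := ℝ)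
    have Kconvex : Convex ℝ K := convex_convexHull ℝ _
    set B : Set ({x // x ∈ Y} → ℝ) := {v : ({x // x ∈ Y} → ℝ) | ∀ y : {x // x ∈ Y}, |v y - f ↑y| ≤ γ} with hB
    have Bclosed : IsClosed B := by
      have : B = ⋂ y : {x // x ∈ Y}, {v : ({x // x ∈ Y} → ℝ) | |v y - f ↑y| ≤ γ} := by
        ext v; simp [hB, Set.mem_iInter]
      rw [this]
      exact isClosed_iInter fun y =>
        isClosed_le (((continuous_apply y).sub continuous_const).abs) continuous_const
    have Bconvex : Convex ℝ B := by
      intro v₁ h1 v₂ h2 a b ha hb hab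
      intro y
      have key : (a • v₁ + b • v₂) y - f ↑y = a * (v₁ y - f ↑y) + b * (v₂ y - f ↑y) := by
        have : f ↑y = a * f ↑y + b * f ↑y := by rw [← add_mul, hab, one_mul]
        simp only [Pi.add_apply, Pi.smul_apply, smul_eq_mul]
        nlinarith [this]
      rw [key]
      calc |a * (v₁ y - f ↑y) + b * (v₂ y - f ↑y)|
          ≤ |a * (v₁ y - f ↑y)| + |b * (v₂ y - f ↑y)| := abs_add_le _ _
        _ = a * |v₁ y - f ↑y| + b * |v₂ y - f ↑y| := by
            rw [abs_mul, abs_mul, abs_of_nonneg ha, abs_of_nonneg hb]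
        _ ≤ a * γ + b * γ := by
            exact add_le_add (mul_le_mul_of_nonneg_left (h1 y) ha)
              (mul_le_mul_of_nonneg_left (h2 y) hb)
        _ = γ := by rw [← add_mul, hab, one_mul]
    have hdisj : Disjoint K B := by
      rw [Set.disjoint_left]
      intro v hvK hvB
      have hmem : v ∈ {w : {x // x ∈ Y} → ℝ | ∃ c : Finset (Fin d) → ℝ,
          (∀ S : Finset (Fin d), t < S.card → c S = 0) ∧ weight c ≤ W ∧ M c = w} := by
        refine convexHull_min ?_ ?_ hvK
        · rintro w ⟨cc, ⟨S, hScard, hcc⟩, rfl⟩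
          have hwvtx : ∀ ε : ℝ, |ε| = 1 →
              (∀ S' : Finset (Fin d), t < S'.card → vtx S ε S' = 0) ∧ weight (vtx S ε) ≤ W := by
            intro ε hε
            constructor
            · intro S' hS'
              have hne : S' ≠ S := by
                intro hEq; rw [hEq] at hS'; omega
              simp [vtx, if_neg hne]
            · unfold weight
              rw [Finset.sum_eq_single S]
              · simp [vtx, abs_mul, hε, le_of_lt hW, abs_of_pos hW]
              · intro S' _ hne; simp [vtx, if_neg hne]
              · intro hS; exact absurd (Finset.mem_univ S) hS
            
          rcases hcc with rfl | rfl
          · obtain ⟨h1, h2⟩ := hwvtx 1 (by norm_num)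
            exact ⟨vtx S 1, h1, h2, rfl⟩
          · obtain ⟨h1, h2⟩ := hwvtx (-1) (by norm_num)
            exact ⟨vtx S (-1), h1, h2, rfl⟩
        · rintro w₁ ⟨c₁, hc₁s, hc₁w, rfl⟩ w₂ ⟨c₂, hc₂s, hc₂w, rfl⟩ a b ha hb hab
          refine ⟨a • c₁ + b • c₂, ?_, ?_, ?_⟩
          · intro S hS
            simp [hc₁s S hS, hc₂s S hS]
          · unfold weight
            calc ∑ S : Finset (Fin d), |(a • c₁ + b • c₂) S|
                ≤ ∑ S : Finset (Fin d), (a * |c₁ S| + b * |c₂ S|) := by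
                  apply Finset.sum_le_sum
                  intro S _
                  simp only [Pi.add_apply, Pi.smul_apply, smul_eq_mul]
                  calc |a * c₁ S + b * c₂ S| ≤ |a * c₁ S| + |b * c₂ S| := abs_add_le _ _
                    _ = a * |c₁ S| + b * |c₂ S| := by
                        rw [abs_mul, abs_mul, abs_of_nonneg ha, abs_of_nonneg hb]
              _ = a * weight c₁ + b * weight c₂ := by
                  rw [Finset.sum_add_distrib, ← Finset.mul_sum, ← Finset.mul_sum]; rfl
              _ ≤ a * W + b * W := by
                  exact add_le_add (mul_le_mul_of_nonneg_left hc₁w ha)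
                    (mul_le_mul_of_nonneg_left hc₂w hb)
              _ = W := by rw [← add_mul, hab, one_mul]
          · funext y
            show evalPoly (a • c₁ + b • c₂) ↑y = (a • M c₁ + b • M c₂) y
            simp only [Pi.add_apply, Pi.smul_apply, smul_eq_mul]
            unfold evalPoly M
            unfold evalPoly
            rw [Finset.mul_sum, Finset.mul_sum, ← Finset.sum_add_distrib]
            apply Finset.sum_congr rfl
            intro S _
            simp only [Pi.add_apply, Pi.smul_apply, smul_eq_mul]
            ring
      obtain ⟨c, hcs, hcw, hMc⟩ := hmem
      apply h
      refine ⟨c, ?_, hcw, ?_⟩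
      · unfold polyDegree
        apply Finset.sup_le
        intro S hS
        rw [Finset.mem_filter] at hS
        by_contra hlt
        exact hS.2 (hcs S (by omega))
      · intro y hy
        have : evalPoly c y = v ⟨y, hy⟩ := by rw [← hMc]
        rw [this]
        exact hvB ⟨y, hy⟩
    obtain ⟨φ, u, v, hKu, huv, hvB'⟩ :=
      geometric_hahn_banach_compact_closed Kconvex Kcompact Bconvex Bclosed hdisj
    set Φ : {x // x ∈ Y} → ℝ :=
      fun y => φ (fun y' => if y = y' then (1 : ℝ) else 0) with hΦ
    have hrep : ∀ w : {x // x ∈ Y} → ℝ, φ w = ∑ y : {x // x ∈ Y}, w y * Φ y := by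
      intro w
      conv_lhs => rw [pi_eq_sum_univ w]
      rw [map_sum]
      apply Finset.sum_congr rfl
      intro y _
      rw [map_smul, smul_eq_mul]
    have hu0 : 0 < u := by
      have hmem1 : M (vtx ∅ 1) ∈ M '' F := ⟨vtx ∅ 1, ⟨∅, by simp, Or.inl rfl⟩, rfl⟩
      have hmem2 : M (vtx ∅ (-1)) ∈ M '' F := ⟨vtx ∅ (-1), ⟨∅, by simp, Or.inr rfl⟩, rfl⟩
      have hneg : M (vtx ∅ (-1)) = -(M (vtx ∅ 1)) := by
        funext y
        show evalPoly (vtx ∅ (-1)) ↑y = -(evalPoly (vtx ∅ 1) ↑y)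
        rw [evalvtx, evalvtx]; ring
      have h0K : (0 : {x // x ∈ Y} → ℝ) ∈ K := by
        have hcomb := Kconvex (subset_convexHull ℝ _ hmem1) (subset_convexHull ℝ _ hmem2)
          (a := 1/2) (b := 1/2) (by norm_num) (by norm_num) (by norm_num)
        have : (1/2 : ℝ) • M (vtx ∅ 1) + (1/2 : ℝ) • M (vtx ∅ (-1)) = 0 := by
          rw [hneg, smul_neg, add_neg_cancel]
        rwa [this] at hcomb
      have := hKu 0 h0K
      rwa [map_zero] at this
    set σ : Finset (Fin d) → ℝ :=
      fun S => ∑ y : {x // x ∈ Y}, Φ y * ∏ i ∈ S, (y : Fin d → ℝ) i with hσdef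
    have hσ : ∀ S : Finset (Fin d), S.card ≤ t → W * |σ S| < u := by
      intro S hS
      have hevalM : ∀ ε : ℝ, φ (M (vtx S ε)) = ε * (W * σ S) := by
        intro ε
        rw [hrep]
        show (∑ y : {x // x ∈ Y}, evalPoly (vtx S ε) ↑y * Φ y) = ε * (W * σ S)
        rw [hσdef]
        simp only [evalvtx]
        rw [Finset.mul_sum, Finset.mul_sum]
        apply Finset.sum_congr rfl
        intro y _
        ring
      have h1 : φ (M (vtx S 1)) < u :=
        hKu _ (subset_convexHull ℝ _ ⟨vtx S 1, ⟨S, hS, Or.inl rfl⟩, rfl⟩)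
      have h2 : φ (M (vtx S (-1))) < u :=
        hKu _ (subset_convexHull ℝ _ ⟨vtx S (-1), ⟨S, hS, Or.inr rfl⟩, rfl⟩)
      rw [hevalM 1, one_mul] at h1
      rw [hevalM (-1)] at h2
      have habs : |W * σ S| < u := abs_lt.2 ⟨by linarith, h1⟩
      rwa [abs_mul, abs_of_pos hW] at habs
    set N : ℝ := ∑ y : {x // x ∈ Y}, |Φ y| with hNdef
    set D : ℝ := ∑ y : {x // x ∈ Y}, Φ y * f ↑y with hDdef
    set b₀ : ({x // x ∈ Y} → ℝ) := fun y => f ↑y - γ * (if 0 ≤ Φ y then 1 else -1) with hb₀def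
    have hb₀B : b₀ ∈ B := by
      intro y
      show |f ↑y - γ * (if 0 ≤ Φ y then 1 else -1) - f ↑y| ≤ γ
      split_ifs <;> simp [abs_of_nonneg hγ]
    have hφb₀ : φ b₀ = D - γ * N := by
      rw [hrep]
      calc (∑ y : {x // x ∈ Y}, b₀ y * Φ y)
          = ∑ y : {x // x ∈ Y}, (Φ y * f ↑y - γ * |Φ y|) := by
            apply Finset.sum_congr rfl
            intro y _
            show (f ↑y - γ * (if 0 ≤ Φ y then 1 else -1)) * Φ y = Φ y * f ↑y - γ * |Φ y|
            by_cases hy : 0 ≤ Φ y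
            · rw [if_pos hy, abs_of_nonneg hy]; ring
            · rw [if_neg hy, abs_of_neg (lt_of_not_ge hy)]; ring
        _ = D - γ * N := by rw [Finset.sum_sub_distrib, ← Finset.mul_sum]
    have hvD : v < D - γ * N := by
      have := hvB' b₀ hb₀B
      rwa [hφb₀] at this
    have hN0 : 0 < N := by
      rcases (Finset.sum_nonneg (fun y _ => abs_nonneg (Φ y)) : (0:ℝ) ≤ N).lt_or_eq with h' | h'
      · exact h'
      · exfalso
        have hzero : ∀ y : {x // x ∈ Y}, Φ y = 0 := by
          intro y
          have := (Finset.sum_eq_zero_iff_of_nonneg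
            (fun y _ => abs_nonneg (Φ y))).mp h'.symm y (Finset.mem_univ y)
          exact abs_eq_zero.mp this
        have hD0 : D = 0 := by
          rw [hDdef]; apply Finset.sum_eq_zero; intro y _; rw [hzero y, zero_mul]
        have hN0' : N = 0 := by rw [hNdef, ← h']
        rw [hN0', mul_zero, sub_zero, hD0] at hvD
        linarith
    set Ψ : (Fin d → ℝ) → ℝ := fun y => if hy : y ∈ Y then Φ ⟨y, hy⟩ / N else 0 with hΨdef
    have key : ∀ r : (Fin d → ℝ) → ℝ,
        (∑ y ∈ Y, Ψ y * r y) = (∑ y : {x // x ∈ Y}, Φ y * r ↑y) / N := by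
      intro r
      rw [← Finset.sum_coe_sort Y (fun y => Ψ y * r y), Finset.sum_div]
      apply Finset.sum_congr rfl
      intro y _
      have : Ψ ↑y = Φ y / N := by
        simp [hΨdef, y.coe_prop]
      rw [this, div_mul_eq_mul_div]
    have habsΨ : (∑ y ∈ Y, |Ψ y|) = 1 := by
      rw [← Finset.sum_coe_sort Y (fun y => |Ψ y|)]
      have : ∀ y : {x // x ∈ Y}, |Ψ ↑y| = |Φ y| / N := by
        intro y
        have h1 : Ψ ↑y = Φ y / N := by simp [hΨdef, y.coe_prop]
        rw [h1, abs_div, abs_of_pos hN0]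
      rw [Finset.sum_congr rfl (fun y _ => this y), ← Finset.sum_div, ← hNdef,
        div_self hN0.ne']
    refine ⟨Ψ, habsΨ, ?_⟩
    intro S hS
    rw [key f, key (fun y => ∏ i ∈ S, y i)]
    have h1 := hσ S hS
    have hgoal : γ < (D - W * |σ S|) / N := by
      rw [lt_div_iff₀ hN0]
      have : W * |σ S| < D - γ * N := by linarith
      linarith
    calc γ < (D - W * |σ S|) / N := hgoal
      _ = D / N - W * (|σ S| / N) := by ring
      _ = D / N - W * |σ S / N| := by rw [abs_div, abs_of_pos hN0]
      _ = (∑ y : {x // x ∈ Y}, Φ y * f ↑y) / N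
          - W * |(∑ y : {x // x ∈ Y}, Φ y * ∏ i ∈ S, (y : Fin d → ℝ) i) / N| := rfl
  · -- reverse direction: weak duality
    rintro ⟨Ψ, hΨ1, hΨ2⟩ ⟨c, hdeg, hwt, herr⟩
    set D : ℝ := ∑ y ∈ Y, Ψ y * f y with hD
    set σ : Finset (Fin d) → ℝ := fun S => ∑ y ∈ Y, Ψ y * ∏ i ∈ S, y i with hσ
    have hempty : γ < D - W * |σ ∅| := by
      have h1 := hΨ2 ∅ (by simp)
      have h2 : σ ∅ = ∑ y ∈ Y, Ψ y * ∏ i ∈ (∅ : Finset (Fin d)), y i := by rw [hσ]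
      rw [← h2] at h1
      exact h1
    have hDγ : γ < D := by
      have : 0 ≤ W * |σ ∅| := mul_nonneg (le_of_lt hW) (abs_nonneg _)
      linarith
    set A : ℝ := ∑ y ∈ Y, Ψ y * (f y - evalPoly c y) with hA
    have hAle : A ≤ γ := by
      calc A ≤ |A| := le_abs_self A
        _ ≤ ∑ y ∈ Y, |Ψ y * (f y - evalPoly c y)| := Finset.abs_sum_le_sum_abs _ _
        _ ≤ ∑ y ∈ Y, |Ψ y| * γ := by
            apply Finset.sum_le_sum
            intro y hy
            rw [abs_mul]
            have herr' : |f y - evalPoly c y| ≤ γ := by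
              rw [abs_sub_comm]; exact herr y hy
            exact mul_le_mul_of_nonneg_left herr' (abs_nonneg _)
        _ = γ := by rw [← Finset.sum_mul, hΨ1, one_mul]
    have hAeq : A = D - ∑ S : Finset (Fin d), c S * σ S := by
      rw [hA, hD]
      have : ∀ y ∈ Y, Ψ y * (f y - evalPoly c y) = Ψ y * f y - Ψ y * evalPoly c y := by
        intro y _; ring
      rw [Finset.sum_congr rfl this, Finset.sum_sub_distrib]
      congr 1
      calc (∑ y ∈ Y, Ψ y * evalPoly c y)
          = ∑ y ∈ Y, ∑ S : Finset (Fin d), c S * (Ψ y * ∏ i ∈ S, y i) := by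
            apply Finset.sum_congr rfl
            intro y _
            unfold evalPoly
            rw [Finset.mul_sum]
            apply Finset.sum_congr rfl
            intro S _
            ring
        _ = ∑ S : Finset (Fin d), ∑ y ∈ Y, c S * (Ψ y * ∏ i ∈ S, y i) := Finset.sum_comm
        _ = ∑ S : Finset (Fin d), c S * σ S := by
            apply Finset.sum_congr rfl
            intro S _
            have h2 : σ S = ∑ y ∈ Y, Ψ y * ∏ i ∈ S, y i := by rw [hσ]
            rw [h2, Finset.mul_sum]
    have hcard : ∀ S : Finset (Fin d), c S ≠ 0 → S.card ≤ t := by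
      intro S hcS
      have hmem : S ∈ Finset.univ.filter (fun S => c S ≠ 0) := by
        rw [Finset.mem_filter]; exact ⟨Finset.mem_univ S, hcS⟩
      calc S.card ≤ polyDegree c := by
            unfold polyDegree
            exact Finset.le_sup (f := Finset.card) hmem
        _ ≤ t := hdeg
    have hSbound : ∀ S : Finset (Fin d), c S ≠ 0 → W * |σ S| < D - γ := by
      intro S hcS
      have h1 := hΨ2 S (hcard S hcS)
      have h2 : σ S = ∑ y ∈ Y, Ψ y * ∏ i ∈ S, y i := by rw [hσ]
      rw [← h2] at h1
      linarith
    by_cases hc : ∀ S : Finset (Fin d), c S = 0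
    · have : (∑ S : Finset (Fin d), c S * σ S) = 0 :=
        Finset.sum_eq_zero fun S _ => by rw [hc S, zero_mul]
      rw [this, sub_zero] at hAeq
      linarith
    · push_neg at hc
      obtain ⟨S₀, hS₀⟩ := hc
      have hT : (∑ S : Finset (Fin d), |c S| * |σ S|) < D - γ := by
        have hstep : (∑ S : Finset (Fin d), |c S| * |σ S|)
            < ∑ S : Finset (Fin d), |c S| * ((D - γ) / W) := by
          apply Finset.sum_lt_sum
          · intro S _
            by_cases hcS : c S = 0
            · simp [hcS]
            · have := hSbound S hcS
              have hle : |σ S| ≤ (D - γ) / W := by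
                rw [le_div_iff₀ hW, mul_comm]
                linarith
              exact mul_le_mul_of_nonneg_left hle (abs_nonneg _)
          · refine ⟨S₀, Finset.mem_univ S₀, ?_⟩
            have := hSbound S₀ hS₀
            have hlt : |σ S₀| < (D - γ) / W := by
              rw [lt_div_iff₀ hW, mul_comm]
              linarith
            exact mul_lt_mul_of_pos_left hlt (abs_pos.mpr hS₀)
        have hstep2 : (∑ S : Finset (Fin d), |c S| * ((D - γ) / W)) ≤ D - γ := by
          rw [← Finset.sum_mul]
          have hWeq : weight c * ((D - γ) / W) ≤ W * ((D - γ) / W) := by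
            apply mul_le_mul_of_nonneg_right hwt
            apply div_nonneg (by linarith) (le_of_lt hW)
          calc (∑ S : Finset (Fin d), |c S|) * ((D - γ) / W)
              = weight c * ((D - γ) / W) := rfl
            _ ≤ W * ((D - γ) / W) := hWeq
            _ = D - γ := by field_simp
        linarith
      have hEbound : |∑ S : Finset (Fin d), c S * σ S| < D - γ := by
        calc |∑ S : Finset (Fin d), c S * σ S|
            ≤ ∑ S : Finset (Fin d), |c S * σ S| := Finset.abs_sum_le_sum_abs _ _
          _ = ∑ S : Finset (Fin d), |c S| * |σ S| := by
              apply Finset.sum_congr rfl; intro S _; rw [abs_mul]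
          _ < D - γ := hT
      have : A > γ := by
        have := neg_abs_le (∑ S : Finset (Fin d), c S * σ S)
        rw [hAeq]
        have habs := abs_lt.mp hEbound
        linarith
      linarith
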